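/- Let T > 0 and let u : [0,T] × ℝ → ℝ be smooth, and suppose there is a constant C such that |∂_t^i ∂_x^j u(t,x)| ≤ C/(1 + x²) for all (t,x) ∈ [0,T] × ℝ and all 0 ≤ i ≤ 1, 0 ≤ j ≤ 3. Set m = u − u_{xx} and suppose m_t + ∂ₓ[sin(u² − u_x²)·m] = 0 on [0,T] × ℝ. Then the function t ↦ ∫_ℝ m(t,x)·u(t,x) dx is constant on [0,T]. -/

import Mathlib

open MeasureTheory Real Set Filter

/-- The convolution `(p*f)(x) = ∫_ℝ (1/2) e^{-|x-y|} f(y) dy` with `p(x) = (1/2)exp(-|x|)`. -/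
noncomputable def pConv (f : ℝ → ℝ) (x : ℝ) : ℝ := ∫ y : ℝ, (1/2) * Real.exp (-|x - y|) * f y

/-- `(p₊*f)(x) = (1/2)∫_{-∞}^{x} e^{y-x} f(y) dy`. -/
noncomputable def pPlus (f : ℝ → ℝ) (x : ℝ) : ℝ := (1/2) * ∫ y in Set.Iic x, Real.exp (y - x) * f y

/-- `(p₋*f)(x) = (1/2)∫_{x}^{∞} e^{x-y} f(y) dy`. -/
noncomputable def pMinus (f : ℝ → ℝ) (x : ℝ) : ℝ := (1/2) * ∫ y in Set.Ici x, Real.exp (x - y) * f y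

/-- Spatial partial derivative `∂ₓ` of a function of `(t, x)`. -/
noncomputable def pdx (f : ℝ → ℝ → ℝ) : ℝ → ℝ → ℝ := fun t x => deriv (fun y => f t y) x

/-- Time partial derivative `∂ₜ` of a function of `(t, x)`. -/
noncomputable def pdt (f : ℝ → ℝ → ℝ) : ℝ → ℝ → ℝ := fun t x => deriv (fun s => f s x) t

/-- The momentum density `m = u - u_{xx}`. -/
noncomputable def mF (u : ℝ → ℝ → ℝ) : ℝ → ℝ → ℝ := fun t x => u t x - pdx (pdx u) t x

/-- The blow-up quantity `M = cos(u² - u_x²) · m · u_x`. -/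
noncomputable def MF (u : ℝ → ℝ → ℝ) : ℝ → ℝ → ℝ :=
  fun t x => Real.cos ((u t x) ^ 2 - (pdx u t x) ^ 2) * mF u t x * pdx u t x

section PD
variable {g : ℝ → ℝ → ℝ} (hg : ContDiff ℝ (⊤ : ℕ∞) (Function.uncurry g))
include hg

theorem hDx (t x : ℝ) :
    HasDerivAt (fun y => g t y) (fderiv ℝ (Function.uncurry g) (t, x) (0, 1)) x := by
  have h1 : HasFDerivAt (Function.uncurry g) (fderiv ℝ (Function.uncurry g) (t, x)) (t, x) :=
    (hg.differentiable (by simp) _).hasFDerivAt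
  have h2 : HasDerivAt (fun y : ℝ => ((t, y) : ℝ × ℝ)) ((0 : ℝ), (1 : ℝ)) x :=
    (hasDerivAt_const x t).prodMk (hasDerivAt_id x)
  exact h1.comp_hasDerivAt x h2

theorem hDt (t x : ℝ) :
    HasDerivAt (fun s => g s x) (fderiv ℝ (Function.uncurry g) (t, x) (1, 0)) t := by
  have h1 : HasFDerivAt (Function.uncurry g) (fderiv ℝ (Function.uncurry g) (t, x)) (t, x) :=
    (hg.differentiable (by simp) _).hasFDerivAt
  have h2 : HasDerivAt (fun s : ℝ => ((s, x) : ℝ × ℝ)) ((1 : ℝ), (0 : ℝ)) t :=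
    (hasDerivAt_id t).prodMk (hasDerivAt_const t x)
  exact h1.comp_hasDerivAt t h2

theorem pdx_eq (t x : ℝ) : pdx g t x = fderiv ℝ (Function.uncurry g) (t, x) (0, 1) :=
  (hDx hg t x).deriv

theorem pdt_eq (t x : ℝ) : pdt g t x = fderiv ℝ (Function.uncurry g) (t, x) (1, 0) :=
  (hDt hg t x).deriv

theorem hDx' (t x : ℝ) : HasDerivAt (fun y => g t y) (pdx g t x) x := by
  have h := hDx hg t x
  rwa [← pdx_eq hg t x] at h

theorem hDt' (t x : ℝ) : HasDerivAt (fun s => g s x) (pdt g t x) t := by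
  have h := hDt hg t x
  rwa [← pdt_eq hg t x] at h

theorem contDiff_pdx : ContDiff ℝ (⊤ : ℕ∞) (Function.uncurry (pdx g)) := by
  have h : ContDiff ℝ (⊤ : ℕ∞) (fun p : ℝ × ℝ => fderiv ℝ (Function.uncurry g) p (0, 1)) :=
    (hg.fderiv_right (by exact_mod_cast le_top)).clm_apply contDiff_const
  convert h using 1
  funext p
  exact pdx_eq hg p.1 p.2

theorem contDiff_pdt : ContDiff ℝ (⊤ : ℕ∞) (Function.uncurry (pdt g)) := by
  have h : ContDiff ℝ (⊤ : ℕ∞) (fun p : ℝ × ℝ => fderiv ℝ (Function.uncurry g) p (1, 0)) :=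
    (hg.fderiv_right (by exact_mod_cast le_top)).clm_apply contDiff_const
  convert h using 1
  funext p
  exact pdt_eq hg p.1 p.2

/-- Clairaut's theorem for `pdx`/`pdt`. -/
theorem pdtx_comm (t x : ℝ) : pdt (pdx g) t x = pdx (pdt g) t x := by
  set f := Function.uncurry g
  have hf' : ContDiff ℝ (⊤ : ℕ∞) (fderiv ℝ f) := hg.fderiv_right (by exact_mod_cast le_top)
  have hff : HasFDerivAt (fderiv ℝ f) (fderiv ℝ (fderiv ℝ f) (t, x)) (t, x) :=
    (hf'.differentiable (by simp) _).hasFDerivAt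
  have hsymm : ∀ v w, fderiv ℝ (fderiv ℝ f) (t, x) v w = fderiv ℝ (fderiv ℝ f) (t, x) w v :=
    second_derivative_symmetric
      (fun y => (hg.differentiable (by simp) y).hasFDerivAt) hff
  have h1 : pdt (pdx g) t x = fderiv ℝ (fderiv ℝ f) (t, x) (1, 0) (0, 1) := by
    have hc : HasDerivAt (fun s => fderiv ℝ f (s, x)) (fderiv ℝ (fderiv ℝ f) (t, x) (1, 0)) t := by
      have h2 : HasDerivAt (fun s : ℝ => ((s, x) : ℝ × ℝ)) ((1 : ℝ), (0 : ℝ)) t :=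
        (hasDerivAt_id t).prodMk (hasDerivAt_const t x)
      exact hff.comp_hasDerivAt t h2
    have h3 : HasDerivAt (fun s => fderiv ℝ f (s, x) (0, 1))
        (fderiv ℝ (fderiv ℝ f) (t, x) (1, 0) (0, 1)) t := by
      have := hc.clm_apply (hasDerivAt_const t (((0 : ℝ), (1 : ℝ)) : ℝ × ℝ))
      simpa using this
    have heq : (fun s => pdx g s x) = fun s => fderiv ℝ f (s, x) (0, 1) := by
      funext s; exact pdx_eq hg s x
    show deriv (fun s => pdx g s x) t = _
    rw [heq]; exact h3.deriv
  have h2 : pdx (pdt g) t x = fderiv ℝ (fderiv ℝ f) (t, x) (0, 1) (1, 0) := by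
    have hc : HasDerivAt (fun y => fderiv ℝ f (t, y)) (fderiv ℝ (fderiv ℝ f) (t, x) (0, 1)) x := by
      have h2 : HasDerivAt (fun y : ℝ => ((t, y) : ℝ × ℝ)) ((0 : ℝ), (1 : ℝ)) x :=
        (hasDerivAt_const x t).prodMk (hasDerivAt_id x)
      exact hff.comp_hasDerivAt x h2
    have h3 : HasDerivAt (fun y => fderiv ℝ f (t, y) (1, 0))
        (fderiv ℝ (fderiv ℝ f) (t, x) (0, 1) (1, 0)) x := by
      have := hc.clm_apply (hasDerivAt_const x (((1 : ℝ), (0 : ℝ)) : ℝ × ℝ))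
      simpa using this
    have heq : (fun y => pdt g t y) = fun y => fderiv ℝ f (t, y) (1, 0) := by
      funext y; exact pdt_eq hg t y
    show deriv (fun y => pdt g t y) x = _
    rw [heq]; exact h3.deriv
  rw [h1, h2, hsymm]

end PD

theorem abs_sub'' (a b : ℝ) : |a - b| ≤ |a| + |b| := by
  rw [sub_eq_add_neg]
  exact (abs_add_le _ _).trans (by rw [abs_neg])

theorem absmul {a b c1 c2 d : ℝ} (hd : 1 ≤ d) (h1 : |a| ≤ c1 / d) (h2 : |b| ≤ c2 / d) :
    |a * b| ≤ c1 * c2 / d := by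
  have hd0 : (0:ℝ) < d := lt_of_lt_of_le one_pos hd
  have hc1 : 0 ≤ c1 / d := (abs_nonneg a).trans h1
  have hc2 : 0 ≤ c2 / d := (abs_nonneg b).trans h2
  have hc2' : 0 ≤ c2 := by
    have := mul_nonneg hc2 hd0.le
    rwa [div_mul_cancel₀ _ hd0.ne'] at this
  calc |a * b| = |a| * |b| := abs_mul a b
    _ ≤ (c1/d) * (c2/d) := mul_le_mul h1 h2 (abs_nonneg b) hc1
    _ ≤ (c1/d) * c2 := mul_le_mul_of_nonneg_left (div_le_self hc2' hd) hc1
    _ = c1 * c2 / d := by ring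

theorem intK (K : ℝ) : Integrable (fun x : ℝ => K / (1 + x ^ 2)) := by
  simpa [div_eq_mul_inv, mul_comm] using integrable_inv_one_add_sq.const_mul K

theorem tendsto_sq_top : Tendsto (fun y : ℝ => (1 + y ^ 2)) atTop atTop :=
  tendsto_atTop_add_const_left _ 1 (tendsto_pow_atTop two_ne_zero)

theorem tendsto_sq_bot : Tendsto (fun y : ℝ => (1 + y ^ 2)) atBot atTop := by
  refine tendsto_atTop_add_const_left _ 1 ?_
  have h1 : Tendsto (fun x : ℝ => x ^ 2) atTop atTop := tendsto_pow_atTop two_ne_zero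
  have h2 : Tendsto (fun y : ℝ => -y) atBot atTop := tendsto_neg_atBot_atTop
  exact (h1.comp h2).congr fun y => by simp [Function.comp]

theorem stmt17 (T : ℝ) (hT : 0 < T) (u : ℝ → ℝ → ℝ)
    (hu : ContDiff ℝ (⊤ : ℕ∞) (Function.uncurry u))
    (C : ℝ)
    -- decay: |∂ₜ^i ∂ₓ^j u(t,x)| ≤ C/(1 + x²) for 0 ≤ i ≤ 1, 0 ≤ j ≤ 3
    (hdecay : ∀ i ≤ 1, ∀ j ≤ 3, ∀ t ∈ Set.Icc (0 : ℝ) T, ∀ x : ℝ,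
      |(pdt^[i] (pdx^[j] u)) t x| ≤ C / (1 + x ^ 2))
    -- the sine-mCH equation m_t + ∂ₓ[sin(u² - u_x²)·m] = 0 on [0,T] × ℝ
    (heq : ∀ t ∈ Set.Icc (0 : ℝ) T, ∀ x : ℝ,
      pdt (mF u) t x
        + pdx (fun s y => Real.sin ((u s y) ^ 2 - (pdx u s y) ^ 2) * mF u s y) t x = 0) :
    ∀ t₁ ∈ Set.Icc (0 : ℝ) T, ∀ t₂ ∈ Set.Icc (0 : ℝ) T,
      ∫ x : ℝ, mF u t₁ x * u t₁ x = ∫ x : ℝ, mF u t₂ x * u t₂ x := by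
  -- smoothness of all the players
  have h1sm : ContDiff ℝ (⊤ : ℕ∞) (Function.uncurry (pdx u)) := contDiff_pdx hu
  have h2sm : ContDiff ℝ (⊤ : ℕ∞) (Function.uncurry (pdx (pdx u))) := contDiff_pdx h1sm
  have hMsm : ContDiff ℝ (⊤ : ℕ∞) (Function.uncurry (mF u)) := hu.sub h2sm
  have hFsm : ContDiff ℝ (⊤ : ℕ∞) (Function.uncurry (fun s y => mF u s y * u s y)) :=
    hMsm.mul hu
  have hPsm : ContDiff ℝ (⊤ : ℕ∞) (Function.uncurry (pdt u)) := contDiff_pdt hu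
  have hQsm : ContDiff ℝ (⊤ : ℕ∞) (Function.uncurry (pdt (pdx u))) := contDiff_pdt h1sm
  have hF'sm : ContDiff ℝ (⊤ : ℕ∞)
      (Function.uncurry (pdt (fun s y => mF u s y * u s y))) := contDiff_pdt hFsm
  -- decay bounds for the individual derivatives
  have hb0 : ∀ t ∈ Set.Icc (0:ℝ) T, ∀ x : ℝ, |u t x| ≤ C / (1 + x ^ 2) := by
    intro t ht x
    simpa using hdecay 0 (by norm_num) 0 (by norm_num) t ht x
  have hb1 : ∀ t ∈ Set.Icc (0:ℝ) T, ∀ x : ℝ, |pdx u t x| ≤ C / (1 + x ^ 2) := by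
    intro t ht x
    simpa [Function.iterate_succ_apply', Function.iterate_one] using
      hdecay 0 (by norm_num) 1 (by norm_num) t ht x
  have hb2 : ∀ t ∈ Set.Icc (0:ℝ) T, ∀ x : ℝ, |pdx (pdx u) t x| ≤ C / (1 + x ^ 2) := by
    intro t ht x
    simpa [Function.iterate_succ_apply', Function.iterate_one] using
      hdecay 0 (by norm_num) 2 (by norm_num) t ht x
  have hc0 : ∀ t ∈ Set.Icc (0:ℝ) T, ∀ x : ℝ, |pdt u t x| ≤ C / (1 + x ^ 2) := by
    intro t ht x
    simpa using hdecay 1 (by norm_num) 0 (by norm_num) t ht x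
  have hc1 : ∀ t ∈ Set.Icc (0:ℝ) T, ∀ x : ℝ, |pdt (pdx u) t x| ≤ C / (1 + x ^ 2) := by
    intro t ht x
    simpa [Function.iterate_succ_apply', Function.iterate_one] using
      hdecay 1 (by norm_num) 1 (by norm_num) t ht x
  have hc2 : ∀ t ∈ Set.Icc (0:ℝ) T, ∀ x : ℝ, |pdt (pdx (pdx u)) t x| ≤ C / (1 + x ^ 2) := by
    intro t ht x
    simpa [Function.iterate_succ_apply', Function.iterate_one] using
      hdecay 1 (by norm_num) 2 (by norm_num) t ht x
  have h1d : ∀ x : ℝ, (1:ℝ) ≤ 1 + x ^ 2 := fun x => by nlinarith [sq_nonneg x]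
  have hMF : ∀ s x : ℝ, mF u s x = u s x - pdx (pdx u) s x := fun _ _ => rfl
  -- pointwise time-derivative formulas
  have hpdtM : ∀ s x : ℝ, pdt (mF u) s x = pdt u s x - pdt (pdx (pdx u)) s x :=
    fun s x => ((hDt' hu s x).sub (hDt' h2sm s x)).deriv
  have hpdtF : ∀ s x : ℝ, pdt (fun s y => mF u s y * u s y) s x
      = pdt (mF u) s x * u s x + mF u s x * pdt u s x :=
    fun s x => ((hDt' hMsm s x).mul (hDt' hu s x)).deriv
  -- bounds for the integrand and its time derivative
  have hmbd : ∀ s ∈ Set.Icc (0:ℝ) T, ∀ x : ℝ, |mF u s x| ≤ (C + C) / (1 + x ^ 2) := by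
    intro s hs x
    rw [hMF]
    refine (abs_sub'' _ _).trans ?_
    rw [add_div]
    exact add_le_add (hb0 s hs x) (hb2 s hs x)
  have hmtbd : ∀ s ∈ Set.Icc (0:ℝ) T, ∀ x : ℝ, |pdt (mF u) s x| ≤ (C + C) / (1 + x ^ 2) := by
    intro s hs x
    rw [hpdtM]
    refine (abs_sub'' _ _).trans ?_
    rw [add_div]
    exact add_le_add (hc0 s hs x) (hc2 s hs x)
  have hFbd : ∀ s ∈ Set.Icc (0:ℝ) T, ∀ x : ℝ,
      |mF u s x * u s x| ≤ (C + C) * C / (1 + x ^ 2) :=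
    fun s hs x => absmul (h1d x) (hmbd s hs x) (hb0 s hs x)
  have hF'bd : ∀ s ∈ Set.Icc (0:ℝ) T, ∀ x : ℝ,
      |pdt (fun s y => mF u s y * u s y) s x|
        ≤ ((C + C) * C + (C + C) * C) / (1 + x ^ 2) := by
    intro s hs x
    rw [hpdtF]
    refine (abs_add_le _ _).trans ?_
    rw [add_div]
    exact add_le_add (absmul (h1d x) (hmtbd s hs x) (hb0 s hs x))
      (absmul (h1d x) (hmbd s hs x) (hc0 s hs x))
  -- continuity/measurability of slices
  have hcontF : ∀ s : ℝ, Continuous (fun x => mF u s x * u s x) :=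
    fun s => hFsm.continuous.comp (Continuous.prodMk_right s)
  have hcontF' : ∀ s : ℝ, Continuous (fun x => pdt (fun s y => mF u s y * u s y) s x) :=
    fun s => hF'sm.continuous.comp (Continuous.prodMk_right s)
  have hFint : ∀ s ∈ Set.Icc (0:ℝ) T, Integrable (fun x => mF u s x * u s x) := by
    intro s hs
    refine (intK ((C + C) * C)).mono' (hcontF s).aestronglyMeasurable ?_
    exact ae_of_all _ fun x => by rw [Real.norm_eq_abs]; exact hFbd s hs x
  have hF'int : ∀ s ∈ Set.Icc (0:ℝ) T,
      Integrable (fun x => pdt (fun s y => mF u s y * u s y) s x) := by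
    intro s hs
    refine (intK ((C + C) * C + (C + C) * C)).mono' (hcontF' s).aestronglyMeasurable ?_
    exact ae_of_all _ fun x => by rw [Real.norm_eq_abs]; exact hF'bd s hs x
  -- the key vanishing integral
  have key : ∀ t ∈ Set.Icc (0:ℝ) T, (∫ x : ℝ, pdt (fun s y => mF u s y * u s y) t x) = 0 := by
    intro t ht
    set G : ℝ → ℝ := fun y =>
      -2 * Real.sin (u t y ^ 2 - pdx u t y ^ 2) * (u t y - pdx (pdx u) t y) * u t y
        + pdt (pdx u) t y * u t y - pdx u t y * pdt u t y
        - Real.cos (u t y ^ 2 - pdx u t y ^ 2) with hGdef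
    -- G has derivative pdt(m·u) everywhere (using the PDE)
    have hGderiv : ∀ x : ℝ, HasDerivAt G (pdt (fun s y => mF u s y * u s y) t x) x := by
      intro x
      have hA := hDx' hu t x
      have hB := hDx' h1sm t x
      have hC2 := hDx' h2sm t x
      have hP := hDx' hPsm t x
      have hQ := hDx' hQsm t x
      have hm : HasDerivAt (fun y => u t y - pdx (pdx u) t y)
          (pdx u t x - pdx (pdx (pdx u)) t x) x := hA.sub hC2
      have hw := (hA.pow 2).sub (hB.pow 2)
      have hG1 := (((hw.sin.const_mul (-2 : ℝ)).mul hm).mul hA)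
      have hG := ((hG1.add (hQ.mul hA)).sub (hB.mul hP)).sub hw.cos
      have hflux := hw.sin.mul hm
      have hfluxd := hflux.deriv
      have e1 : pdx (fun s y => Real.sin ((u s y) ^ 2 - (pdx u s y) ^ 2) * mF u s y) t x
          = deriv (fun y => Real.sin (u t y ^ 2 - pdx u t y ^ 2)
              * (u t y - pdx (pdx u) t y)) x := rfl
      have E := heq t ht x
      rw [hpdtM t x, e1] at E
      erw [hfluxd] at E
      simp only [Pi.pow_apply, Pi.sub_apply, Nat.cast_ofNat] at E hG
      have htarg : pdt (fun s y => mF u s y * u s y) t x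
          = (pdt u t x - pdt (pdx (pdx u)) t x) * u t x
            + (u t x - pdx (pdx u) t x) * pdt u t x := by
        rw [hpdtF t x, hpdtM t x, hMF]
      have hfin : (-2 * (Real.cos (u t x ^ 2 - pdx u t x ^ 2)
            * (2 * u t x ^ 1 * pdx u t x - 2 * pdx u t x ^ 1 * pdx (pdx u) t x))
            * (u t x - pdx (pdx u) t x)
          + -2 * Real.sin (u t x ^ 2 - pdx u t x ^ 2)
            * (pdx u t x - pdx (pdx (pdx u)) t x)) * u t x
          + -2 * Real.sin (u t x ^ 2 - pdx u t x ^ 2) * (u t x - pdx (pdx u) t x) * pdx u t x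
          + (pdx (pdt (pdx u)) t x * u t x + pdt (pdx u) t x * pdx u t x)
          - (pdx (pdx u) t x * pdt u t x + pdx u t x * pdx (pdt u) t x)
          - -Real.sin (u t x ^ 2 - pdx u t x ^ 2)
            * (2 * u t x ^ 1 * pdx u t x - 2 * pdx u t x ^ 1 * pdx (pdx u) t x)
          = pdt (fun s y => mF u s y * u s y) t x := by
        rw [htarg, ← pdtx_comm h1sm t x, ← pdtx_comm hu t x]
        linear_combination (-2 * u t x) * E
      exact hfin ▸ hG
    -- limits of G at ±∞
    have tendG : ∀ l : Filter ℝ,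
        Tendsto (fun y : ℝ => C / (1 + y ^ 2)) l (nhds 0) → Tendsto G l (nhds (-1)) := by
      intro l hl
      have z : ∀ f : ℝ → ℝ, (∀ y, |f y| ≤ C / (1 + y ^ 2)) → Tendsto f l (nhds 0) :=
        fun f hf => squeeze_zero_norm (fun y => by rw [Real.norm_eq_abs]; exact hf y) hl
      have hA := z _ (fun y => hb0 t ht y)
      have hB := z _ (fun y => hb1 t ht y)
      have hC2 := z _ (fun y => hb2 t ht y)
      have hP := z _ (fun y => hc0 t ht y)
      have hQ := z _ (fun y => hc1 t ht y)
      have hw : Tendsto (fun y => u t y ^ 2 - pdx u t y ^ 2) l (nhds 0) := by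
        have := (hA.pow 2).sub (hB.pow 2)
        norm_num at this
        exact this
      have hsin : Tendsto (fun y => Real.sin (u t y ^ 2 - pdx u t y ^ 2)) l (nhds 0) := by
        have := (Real.continuous_sin.tendsto 0).comp hw
        simpa [Function.comp_def] using this
      have hcos : Tendsto (fun y => Real.cos (u t y ^ 2 - pdx u t y ^ 2)) l (nhds 1) := by
        have := (Real.continuous_cos.tendsto 0).comp hw
        simpa [Function.comp_def] using this
      have hm : Tendsto (fun y => u t y - pdx (pdx u) t y) l (nhds 0) := by
        have := hA.sub hC2
        norm_num at this
        exact this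
      have hconst : Tendsto (fun _ : ℝ => (-2 : ℝ)) l (nhds (-2)) := tendsto_const_nhds
      have final := ((((hconst.mul hsin).mul hm).mul hA).add (hQ.mul hA)).sub
        (hB.mul hP) |>.sub hcos
      rw [(by norm_num : (-2:ℝ) * 0 * 0 * 0 + 0 * 0 - 0 * 0 - 1 = -1)] at final
      exact final
    have hGtop : Tendsto G atTop (nhds (-1)) :=
      tendG atTop (Tendsto.div_atTop tendsto_const_nhds tendsto_sq_top)
    have hGbot : Tendsto G atBot (nhds (-1)) :=
      tendG atBot (Tendsto.div_atTop tendsto_const_nhds tendsto_sq_bot)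
    -- fundamental theorem of calculus on both半 half-lines
    have hIic : ∫ x in Set.Iic (0:ℝ), pdt (fun s y => mF u s y * u s y) t x = G 0 - (-1) :=
      integral_Iic_of_hasDerivAt_of_tendsto' (fun x _ => hGderiv x)
        ((hF'int t ht).integrableOn) hGbot
    have hIoi : ∫ x in Set.Ioi (0:ℝ), pdt (fun s y => mF u s y * u s y) t x = -1 - G 0 :=
      integral_Ioi_of_hasDerivAt_of_tendsto' (fun x _ => hGderiv x)
        ((hF'int t ht).integrableOn) hGtop
    have hsplit := intervalIntegral.integral_Iic_add_Ioi (b := (0:ℝ))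
      ((hF'int t ht).integrableOn) ((hF'int t ht).integrableOn)
    rw [← hsplit, hIic, hIoi]
    ring
  -- the integral as a function of time
  set g : ℝ → ℝ := fun s => ∫ x : ℝ, mF u s x * u s x with hgdef
  have hgderiv : ∀ s ∈ Set.Ioo (0:ℝ) T, HasDerivAt g 0 s := by
    intro s hs
    have hε : (0:ℝ) < min s (T - s) := lt_min hs.1 (by linarith [hs.2])
    have hball : Metric.ball s (min s (T - s)) ⊆ Set.Icc 0 T := by
      intro r hr
      rw [Metric.mem_ball, Real.dist_eq] at hr
      have h1 := abs_lt.1 hr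
      have h2 := min_le_left s (T - s)
      have h3 := min_le_right s (T - s)
      constructor <;> linarith [h1.1, h1.2]
    have hdom := hasDerivAt_integral_of_dominated_loc_of_deriv_le (Metric.ball_mem_nhds s hε)
      (F := fun s x => mF u s x * u s x)
      (F' := fun s x => pdt (fun s y => mF u s y * u s y) s x)
      (bound := fun x => ((C + C) * C + (C + C) * C) / (1 + x ^ 2))
      (Eventually.of_forall fun s => (hcontF s).aestronglyMeasurable)
      (hFint s (Set.Ioo_subset_Icc_self hs))
      (hcontF' s).aestronglyMeasurable
      (ae_of_all _ fun x r hr => by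
        rw [Real.norm_eq_abs]; exact hF'bd r (hball hr) x)
      (intK _)
      (ae_of_all _ fun x r _ => hDt' hFsm r x)
    have h := hdom.2
    rw [key s (Set.Ioo_subset_Icc_self hs)] at h
    exact h
  have hgcont : ContinuousOn g (Set.Icc 0 T) := by
    refine continuousOn_of_dominated (fun s hs => (hcontF s).aestronglyMeasurable)
      (fun s hs => ae_of_all _ fun x => by rw [Real.norm_eq_abs]; exact hFbd s hs x)
      (intK ((C + C) * C)) (ae_of_all _ fun x => ?_)
    exact (hFsm.continuous.comp (continuous_id.prodMk continuous_const)).continuousOn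
  -- g is constant on the open interval
  have key2 : ∀ a ∈ Set.Ioo (0:ℝ) T, ∀ b ∈ Set.Ioo (0:ℝ) T, a ≤ b → g b = g a := by
    intro a ha b hb hab
    refine constant_of_has_deriv_right_zero
      (hgcont.mono (Set.Icc_subset_Icc ha.1.le hb.2.le)) (fun x hx => ?_) b ⟨hab, le_refl b⟩
    exact (hgderiv x ⟨lt_of_lt_of_le ha.1 hx.1, lt_of_lt_of_le hx.2 hb.2.le⟩).hasDerivWithinAt
  have hmid : T / 2 ∈ Set.Ioo (0:ℝ) T := ⟨by linarith, by linarith⟩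
  have hIoo : ∀ r ∈ Set.Ioo (0:ℝ) T, g r = g (T / 2) := by
    intro r hr
    rcases le_total r (T / 2) with h | h
    · exact (key2 r hr (T / 2) hmid h).symm
    · exact key2 (T / 2) hmid r hr h
  have hext : ∀ s ∈ Set.Icc (0:ℝ) T, g s = g (T / 2) := by
    intro s hs
    have hcl : s ∈ closure (Set.Ioo (0:ℝ) T) := by
      rw [closure_Ioo hT.ne]; exact hs
    haveI hne : (nhdsWithin s (Set.Ioo (0:ℝ) T)).NeBot :=
      mem_closure_iff_nhdsWithin_neBot.1 hcl
    have l1 : Tendsto g (nhdsWithin s (Set.Ioo (0:ℝ) T)) (nhds (g s)) :=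
      (hgcont s hs).mono Set.Ioo_subset_Icc_self
    have l2 : Tendsto g (nhdsWithin s (Set.Ioo (0:ℝ) T)) (nhds (g (T / 2))) := by
      refine Tendsto.congr' ?_ tendsto_const_nhds
      filter_upwards [self_mem_nhdsWithin] with r hr
      exact (hIoo r hr).symm
    exact tendsto_nhds_unique l1 l2
  intro t₁ ht₁ t₂ ht₂
  show g t₁ = g t₂
  rw [hext t₁ ht₁, hext t₂ ht₂]
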